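/- arXiv:2102.07823 — 15 statements merged into one kernel-verified Lean document; each statement's English description precedes it below -/
import Mathlib

section
/- A commutative ring R is quasi-local (has a unique maximal ideal) if and only if every proper principal ideal of R is a weakly J-ideal. -/
def IsWeaklyJIdeal {R : Type*} [CommRing R] (I : Ideal R) : Prop :=
  I ≠ ⊤ ∧ ∀ a b : R, a * b ∈ I → a * b ≠ 0 → a ∉ Ideal.jacobson (⊥ : Ideal R) → b ∈ I

def IsJIdeal {R : Type*} [CommRing R] (I : Ideal R) : Prop :=
  I ≠ ⊤ ∧ ∀ a b : R, a * b ∈ I → a ∉ Ideal.jacobson (⊥ : Ideal R) → b ∈ I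

lemma jac_le_max {R : Type*} [CommRing R] {M : Ideal R} (hM : M.IsMaximal) :
    Ideal.jacobson (⊥ : Ideal R) ≤ M :=
  sInf_le ⟨bot_le, hM⟩

theorem stmt1 {R : Type*} [CommRing R] [Nontrivial R] :
    (∃! M : Ideal R, M.IsMaximal) ↔
      ∀ a : R, Ideal.span {a} ≠ ⊤ → IsWeaklyJIdeal (Ideal.span {a}) := by
  constructor
  · rintro ⟨M, hM, huniq⟩ x hx
    refine ⟨hx, fun a b hab hab0 haJ => ?_⟩
    have ha : IsUnit a := by
      by_contra hu
      have hne : Ideal.span {a} ≠ ⊤ := by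
        simpa [Ideal.span_singleton_eq_top] using hu
      obtain ⟨M', hM', hle⟩ := Ideal.exists_le_maximal _ hne
      apply haJ
      refine Ideal.mem_sInf.mpr ?_
      rintro M'' ⟨-, hM''⟩
      have h1 : M' = M := huniq _ hM'
      have h2 : M'' = M := huniq _ hM''
      rw [h2, ← h1]
      exact hle (Ideal.mem_span_singleton_self a)
    obtain ⟨u, rfl⟩ := ha
    have : (↑u⁻¹ : R) * (↑u * b) ∈ Ideal.span {x} := Ideal.mul_mem_left _ _ hab
    simpa using this
  · intro h
    -- key: every non-unit is in the Jacobson radical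
    have key : ∀ a : R, ¬ IsUnit a → a ∈ Ideal.jacobson (⊥ : Ideal R) := by
      intro a ha
      by_contra haJ
      have ha2 : ¬ IsUnit (a * a) := fun hu => ha (isUnit_of_mul_isUnit_left hu)
      have hne : Ideal.span {a * a} ≠ ⊤ := by
        simpa [Ideal.span_singleton_eq_top] using ha2
      have ha0 : a ≠ 0 := by
        rintro rfl
        exact haJ (Ideal.zero_mem _)
      have haa0 : a * a ≠ 0 := by
        intro h0
        apply haJ
        apply Ideal.radical_le_jacobson
        rw [Ideal.mem_radical_iff]
        exact ⟨2, by rw [pow_two]; simpa using h0⟩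
      obtain ⟨-, hwj⟩ := h _ hne
      have haI : a ∈ Ideal.span {a * a} :=
        hwj a a (Ideal.mem_span_singleton_self _) haa0 haJ
      obtain ⟨r, hr⟩ := Ideal.mem_span_singleton.mp haI
      -- a = a * a * r ; set e = a * r, an idempotent
      set e := a * r with he
      have hea : e * a = a := by rw [he]; ring_nf; rw [mul_comm] at hr; linear_combination -hr
      have hee : e * e = e := by
        rw [he]; ring_nf
        calc a ^ 2 * r ^ 2 = (a * a * r) * r := by ring
        _ = a * r := by rw [← hr]
      have heJ : e ∉ Ideal.jacobson (⊥ : Ideal R) := by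
        intro hmem
        exact haJ (by rw [← hea]; exact Ideal.mul_mem_right _ _ hmem)
      have he0 : e ≠ 0 := by
        intro h0
        rw [h0, zero_mul] at hea
        exact ha0 hea.symm
      have heu : ¬ IsUnit e := by
        intro hu
        have : e = 1 := hu.mul_left_cancel (by rw [hee, mul_one])
        exact ha (IsUnit.of_mul_eq_one (a := a) (r) (by rw [← this, he, mul_comm]))
      have hneE : Ideal.span {e} ≠ ⊤ := by
        simpa [Ideal.span_singleton_eq_top] using heu
      obtain ⟨-, hwjE⟩ := h _ hneE
      have : (1 : R) ∈ Ideal.span {e} := by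
        apply hwjE e 1
        · simpa using Ideal.mem_span_singleton_self e
        · simpa using he0
        · exact heJ
      exact hneE ((Ideal.eq_top_iff_one _).mpr this)
    obtain ⟨M₀, hM₀⟩ := Ideal.exists_maximal R
    refine ⟨M₀, hM₀, fun M hM => ?_⟩
    have hle : ∀ (N : Ideal R), N.IsMaximal → N ≤ Ideal.jacobson (⊥ : Ideal R) := by
      intro N hN x hx
      exact key x fun hu => hN.ne_top (N.eq_top_of_isUnit_mem hx hu)
    exact le_antisymm ((hle M hM).trans (jac_le_max hM₀)) ((hle M₀ hM₀).trans (jac_le_max hM))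
end

section
/- If I is a weakly J-ideal of a commutative ring R, then I ⊆ J(R). -/
theorem stmt2 {R : Type*} [CommRing R] (I : Ideal R) (h : IsWeaklyJIdeal I) :
    I ≤ Ideal.jacobson (⊥ : Ideal R) := by
  intro x hx
  by_cases hx0 : x = 0
  · simp [hx0]
  · by_contra hxJ
    have h1 : (1 : R) ∈ I := h.2 x 1 (by simpa) (by simpa) hxJ
    exact h.1 (Ideal.eq_top_of_isUnit_mem I h1 isUnit_one)
end

section
/- In a semiprimitive commutative ring (i.e., a ring with zero Jacobson radical), the zero ideal is the only weakly J-ideal. -/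
theorem stmt3 {R : Type*} [CommRing R] [Nontrivial R]
    (hsp : Ideal.jacobson (⊥ : Ideal R) = ⊥) (I : Ideal R) :
    IsWeaklyJIdeal I ↔ I = ⊥ := by
  constructor
  · rintro ⟨hI, h⟩
    ext x
    simp only [Ideal.mem_bot]
    constructor
    · intro hx
      by_contra hx0
      have h1 : (1 : R) ∈ I := by
        apply h x 1
        · simpa using hx
        · simpa using hx0
        · rw [hsp]; simpa using hx0
      exact hI (Ideal.eq_top_iff_one I |>.mpr h1)
    · rintro rfl; exact I.zero_mem
  · rintro rfl
    refine ⟨by simp, ?_⟩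
    intro a b hab hab0 _
    exact absurd (Ideal.mem_bot.mp hab) hab0
end

section
/- If I is a weakly J-ideal of a commutative ring R that is not a J-ideal, then I² = 0. -/
theorem stmt4 {R : Type*} [CommRing R] (I : Ideal R)
    (h : IsWeaklyJIdeal I) (hn : ¬ IsJIdeal I) : I ^ 2 = ⊥ := by
  by_contra h2
  apply hn
  have hIJ : I ≤ Ideal.jacobson (⊥ : Ideal R) := by
    intro x hx
    by_contra hxJ
    have hx0 : x ≠ 0 := fun e => hxJ (e ▸ (Ideal.jacobson (⊥ : Ideal R)).zero_mem)
    have h1 : (1 : R) ∈ I := h.2 x 1 (by simpa using hx) (by simpa using hx0) hxJ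
    exact h.1 (Ideal.eq_top_of_isUnit_mem I h1 isUnit_one)
  refine ⟨h.1, fun a b hab haJ => ?_⟩
  by_cases hab0 : a * b = 0
  · by_cases haI : ∃ c ∈ I, a * c ≠ 0
    · obtain ⟨c, hc, hac⟩ := haI
      have hmem : a * (b + c) ∈ I := by
        rw [mul_add, hab0, zero_add]; exact I.mul_mem_left a hc
      have hne : a * (b + c) ≠ 0 := by rw [mul_add, hab0, zero_add]; exact hac
      have hbc := h.2 a (b + c) hmem hne haJ
      simpa using I.sub_mem hbc hc
    · push_neg at haI
      by_cases hbI : ∃ i ∈ I, i * b ≠ 0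
      · obtain ⟨i, hi, hib⟩ := hbI
        have hai : a + i ∉ Ideal.jacobson (⊥ : Ideal R) := fun hm =>
          haJ (by simpa using (Ideal.jacobson (⊥ : Ideal R)).sub_mem hm (hIJ hi))
        have hmem : (a + i) * b ∈ I := by
          rw [add_mul, hab0, zero_add]; exact I.mul_mem_right b hi
        have hne : (a + i) * b ≠ 0 := by rw [add_mul, hab0, zero_add]; exact hib
        exact h.2 (a + i) b hmem hne hai
      · push_neg at hbI
        have hle : ¬ (I * I ≤ ⊥) := by
          intro hle
          exact h2 (le_bot_iff.mp (by rw [sq]; exact hle))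
        rw [Ideal.mul_le] at hle
        push_neg at hle
        obtain ⟨i, hi, j, hj, hij⟩ := hle
        have hij0 : i * j ≠ 0 := by simpa using hij
        have hai : a + i ∉ Ideal.jacobson (⊥ : Ideal R) := fun hm =>
          haJ (by simpa using (Ideal.jacobson (⊥ : Ideal R)).sub_mem hm (hIJ hi))
        have key : (a + i) * (b + j) = i * j := by
          have h1 : a * j = 0 := haI j hj
          have h2 : i * b = 0 := hbI i hi
          ring_nf
          rw [hab0, h1, h2]; ring
        have hbb := h.2 (a + i) (b + j) (by rw [key]; exact I.mul_mem_right j hi)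
          (by rw [key]; exact hij0) hai
        simpa using I.sub_mem hbb hj
  · exact h.2 a b hab hab0 haJ
end

section
/- If I is a weakly J-ideal of a commutative ring R that is not a J-ideal, then I is contained in the nilradical N(R). -/
theorem stmt5 {R : Type*} [CommRing R] (I : Ideal R)
    (h : IsWeaklyJIdeal I) (hn : ¬ IsJIdeal I) : I ≤ nilradical R := by
  obtain ⟨hne, hw⟩ := h
  -- extract witnesses from ¬ J-ideal
  rw [IsJIdeal, not_and_or] at hn
  rcases hn with hn | hn
  · exact absurd hne hn
  push_neg at hn
  obtain ⟨a, b, hab, haJ, hbI⟩ := hn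
  -- ab = 0
  have hab0 : a * b = 0 := by
    by_contra h0
    exact hbI (hw a b hab h0 haJ)
  -- I ⊆ J(R)
  have hIJ : ∀ i ∈ I, i ∈ Ideal.jacobson (⊥ : Ideal R) := by
    intro i hi
    by_contra hiJ
    rcases eq_or_ne i 0 with rfl | hi0
    · exact hiJ (Ideal.jacobson ⊥).zero_mem
    · have h1 : (1 : R) ∈ I := hw i 1 (by simpa using hi) (by simpa using hi0) hiJ
      exact hne (Ideal.eq_top_of_isUnit_mem I h1 isUnit_one)
  -- a * I = 0
  have haI : ∀ i ∈ I, a * i = 0 := by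
    intro i hi
    by_contra h0
    have hmem : a * (b + i) ∈ I := by
      rw [mul_add, hab0, zero_add]; exact I.mul_mem_left a hi
    have hne0 : a * (b + i) ≠ 0 := by
      rw [mul_add, hab0, zero_add]; exact h0
    have := hw a (b + i) hmem hne0 haJ
    exact hbI (by simpa using I.sub_mem this hi)
  -- I * b = 0
  have hIb : ∀ i ∈ I, i * b = 0 := by
    intro i hi
    by_contra h0
    have haiJ : a + i ∉ Ideal.jacobson (⊥ : Ideal R) := by
      intro hmem
      exact haJ (by simpa using (Ideal.jacobson ⊥).sub_mem hmem (hIJ i hi))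
    have hmem : (a + i) * b ∈ I := by
      rw [add_mul, hab0, zero_add]; exact I.mul_mem_right b hi
    have hne0 : (a + i) * b ≠ 0 := by
      rw [add_mul, hab0, zero_add]; exact h0
    exact hbI (hw (a + i) b hmem hne0 haiJ)
  -- now each x ∈ I squares to zero
  intro x hx
  refine ⟨2, ?_⟩
  by_contra hx2
  have hx2 : x * x ≠ 0 := by simpa [pow_two] using hx2
  have haxJ : a + x ∉ Ideal.jacobson (⊥ : Ideal R) := by
    intro hmem
    exact haJ (by simpa using (Ideal.jacobson ⊥).sub_mem hmem (hIJ x hx))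
  have key : (a + x) * (b + x) = x * x := by
    linear_combination hab0 + haI x hx + hIb x hx
  have hmem : (a + x) * (b + x) ∈ I := key ▸ I.mul_mem_left x hx
  have hb : b + x ∈ I := hw _ _ hmem (key ▸ hx2) haxJ
  exact hbI (by simpa using I.sub_mem hb hx)
end

section
/- In a reduced commutative ring, a non-zero proper ideal is a weakly J-ideal if and only if it is a J-ideal. -/
theorem stmt6 {R : Type*} [CommRing R] [IsReduced R] (I : Ideal R)
    (h0 : I ≠ ⊥) (h1 : I ≠ ⊤) : IsWeaklyJIdeal I ↔ IsJIdeal I := by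
  constructor
  · rintro ⟨-, hw⟩
    refine ⟨h1, fun a b hab haJ => ?_⟩
    by_cases hz : a * b = 0
    · -- ab = 0 case
      by_cases haI : ∃ x ∈ I, a * x ≠ 0
      · obtain ⟨x, hxI, hax⟩ := haI
        have h1' : a * (b + x) ∈ I := by
          rw [mul_add]; exact I.add_mem hab (I.mul_mem_left a hxI)
        have h2' : a * (b + x) ≠ 0 := by
          rw [mul_add, hz, zero_add]; exact hax
        have := hw a (b + x) h1' h2' haJ
        simpa using I.sub_mem this hxI
      · push_neg at haI
        obtain ⟨x, hxI, hx0⟩ : ∃ x ∈ I, x ≠ 0 := by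
          by_contra hc
          push_neg at hc
          exact h0 (le_antisymm (fun y hy => (Submodule.mem_bot R).2 (hc y hy)) bot_le)
        have hax : a * x = 0 := haI x hxI
        -- a + x ∉ J
        have haxJ : a + x ∉ Ideal.jacobson (⊥ : Ideal R) := by
          intro hmem
          apply haJ
          have h2 : a * (a + x) ∈ Ideal.jacobson (⊥ : Ideal R) :=
            Ideal.mul_mem_left _ a hmem
          have : a ^ 2 ∈ Ideal.jacobson (⊥ : Ideal R) := by
            have : a * (a + x) = a ^ 2 := by rw [mul_add, hax]; ring
            rwa [this] at h2
          exact (Ideal.isRadical_jacobson (⊥ : Ideal R)) ⟨2, this⟩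
        by_cases hxb : x * b = 0
        · -- (a+x)(b+x) = x^2 ≠ 0
          have heq : (a + x) * (b + x) = x ^ 2 := by
            have : (a + x) * (b + x) = a * b + a * x + x * b + x ^ 2 := by ring
            rw [this, hz, hax, hxb]; ring
          have hmemI : (a + x) * (b + x) ∈ I := by
            rw [heq]; exact I.pow_mem_of_mem hxI 2 (by norm_num)
          have hne : (a + x) * (b + x) ≠ 0 := by
            rw [heq]
            intro h
            exact hx0 (IsReduced.eq_zero x ⟨2, h⟩)
          have := hw (a + x) (b + x) hmemI hne haxJ
          simpa using I.sub_mem this hxI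
        · -- (a+x) * b = x * b ≠ 0
          have heq : (a + x) * b = x * b := by
            rw [add_mul, hz, zero_add]
          have hmemI : (a + x) * b ∈ I := by rw [heq]; exact I.mul_mem_right b hxI
          exact hw (a + x) b hmemI (heq ▸ hxb) haxJ
    · exact hw a b hab hz haJ
  · rintro ⟨-, hj⟩
    exact ⟨h1, fun a b hab _ haJ => hj a b hab haJ⟩
end

section
/- A proper ideal I of a commutative ring R is a weakly J-ideal if and only if for every a ∈ R \ J(R), the colon ideal (I : a) equals I ∪ (0 : a). -/
theorem stmt7 {R : Type*} [CommRing R] (I : Ideal R) (hI : I ≠ ⊤) :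
    IsWeaklyJIdeal I ↔
      ∀ a : R, a ∉ Ideal.jacobson (⊥ : Ideal R) →
        {x : R | a * x ∈ I} = (I : Set R) ∪ {x : R | a * x = 0} := by
  constructor
  · rintro ⟨-, h⟩ a ha
    ext x
    constructor
    · intro hx
      by_cases h0 : a * x = 0
      · exact Or.inr h0
      · exact Or.inl (h a x hx h0 ha)
    · rintro (hx | hx)
      · exact Ideal.mul_mem_left I a hx
      · show a * x ∈ I
        rw [hx]; exact I.zero_mem
  · intro h
    refine ⟨hI, fun a b hab hab0 ha => ?_⟩
    have := h a ha
    have hb : b ∈ {x : R | a * x ∈ I} := hab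
    rw [this] at hb
    rcases hb with hb | hb
    · exact hb
    · exact absurd hb hab0
end

section
/- A proper ideal I of a commutative ring R is a weakly J-ideal if and only if for all ideals K, L of R with 0 ≠ KL ⊆ I (i.e., KL ⊆ I and KL ≠ 0), either K ⊆ J(R) or L ⊆ I. -/
theorem stmt8 {R : Type*} [CommRing R] (I : Ideal R) (hI : I ≠ ⊤) :
    IsWeaklyJIdeal I ↔
      ∀ K L : Ideal R, K * L ≤ I → K * L ≠ ⊥ →
        K ≤ Ideal.jacobson (⊥ : Ideal R) ∨ L ≤ I := by
  constructor
  · rintro ⟨-, h⟩ K L hKL hne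
    by_cases hKJ : K ≤ Ideal.jacobson (⊥ : Ideal R)
    · exact Or.inl hKJ
    · right
      obtain ⟨a, haK, haJ⟩ := SetLike.not_le_iff_exists.mp hKJ
      intro b hb
      have hab : a * b ∈ I := hKL (Ideal.mul_mem_mul haK hb)
      by_cases h0 : a * b = 0
      · by_cases haL : ∀ c ∈ L, a * c = 0
        · -- a * L = 0; pick x ∈ K, c ∈ L with x * c ≠ 0
          have hx : ∃ x ∈ K, ∃ c ∈ L, x * c ≠ 0 := by
            by_contra hc
            push_neg at hc
            exact hne (le_bot_iff.mp (Ideal.mul_le.mpr fun r hr s hs =>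
              Ideal.mem_bot.mpr (hc r hr s hs)))
          obtain ⟨x, hxK, c, hcL, hxc⟩ := hx
          obtain ⟨u, huK, huJ, hub, huc⟩ :
              ∃ u ∈ K, u ∉ Ideal.jacobson (⊥ : Ideal R) ∧ u * b = x * b ∧ u * c = x * c := by
            by_cases hxJ : x ∈ Ideal.jacobson (⊥ : Ideal R)
            · refine ⟨a + x, add_mem haK hxK, fun hmem => haJ ?_, ?_, ?_⟩
              · simpa using sub_mem hmem hxJ
              · rw [add_mul, h0, zero_add]
              · rw [add_mul, haL c hcL, zero_add]
            · exact ⟨x, hxK, hxJ, rfl, rfl⟩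
          by_cases hxb : x * b = 0
          · have hbc : b + c ∈ I := by
              refine h u (b + c) (hKL (Ideal.mul_mem_mul huK (add_mem hb hcL))) ?_ huJ
              rw [mul_add, hub, huc, hxb, zero_add]
              exact hxc
            have hcI : c ∈ I := h u c (hKL (Ideal.mul_mem_mul huK hcL)) (huc ▸ hxc) huJ
            simpa using sub_mem hbc hcI
          · exact h u b (hKL (Ideal.mul_mem_mul huK hb)) (hub ▸ hxb) huJ
        · push_neg at haL
          obtain ⟨c, hcL, hac⟩ := haL
          have hbc : b + c ∈ I := by
            refine h a (b + c) (hKL (Ideal.mul_mem_mul haK (add_mem hb hcL))) ?_ haJ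
            rw [mul_add, h0, zero_add]
            exact hac
          have hcI : c ∈ I := h a c (hKL (Ideal.mul_mem_mul haK hcL)) hac haJ
          simpa using sub_mem hbc hcI
      · exact h a b hab h0 haJ
  · intro h
    refine ⟨hI, fun a b hab hab0 haJ => ?_⟩
    have := h (Ideal.span {a}) (Ideal.span {b})
      (by rw [Ideal.span_singleton_mul_span_singleton]
          exact (Ideal.span_singleton_le_iff_mem I).mpr hab)
      (by rw [Ideal.span_singleton_mul_span_singleton]
          simpa [Ideal.span_singleton_eq_bot] using hab0)
    rcases this with hJ | hL
    · exact absurd (hJ (Ideal.mem_span_singleton_self a)) haJ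
    · exact hL (Ideal.mem_span_singleton_self b)
end

section
/- Let S be a non-empty subset of a commutative ring R with S ⊄ I. If I and the annihilator (0 : S) are both weakly J-ideals of R, then the colon ideal (I : S) is a weakly J-ideal of R. -/
theorem stmt9 {R : Type*} [CommRing R] (I : Ideal R) (S : Set R)
    (hne : S.Nonempty) (hS : ¬ S ⊆ (I : Set R))
    (hI : IsWeaklyJIdeal I)
    (hAnn : IsWeaklyJIdeal (Submodule.colon (⊥ : Ideal R) (Ideal.span S))) :
    IsWeaklyJIdeal (Submodule.colon I (Ideal.span S)) := by
  constructor
  · intro h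
    apply hS
    intro s hs
    have h1 : (1 : R) ∈ Submodule.colon I (Ideal.span S) := h ▸ Submodule.mem_top
    have := (Submodule.mem_colon.mp h1) s (Ideal.subset_span hs)
    simpa using this
  · intro a b hab hab0 haJ
    rw [Submodule.mem_colon] at hab ⊢
    by_cases hann : a * b ∈ Submodule.colon (⊥ : Ideal R) (Ideal.span S)
    · have hb : b ∈ Submodule.colon (⊥ : Ideal R) (Ideal.span S) :=
        hAnn.2 a b hann hab0 haJ
      intro p hp
      have : b • p ∈ (⊥ : Ideal R) := Submodule.mem_colon.mp hb p hp
      rw [Submodule.mem_bot] at this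
      rw [smul_eq_mul] at this ⊢
      rw [this]
      exact I.zero_mem
    · rw [Submodule.mem_colon] at hann
      push_neg at hann
      obtain ⟨t, ht, ht0⟩ := hann
      rw [Submodule.mem_bot, smul_eq_mul] at ht0
      have hbt : b * t ∈ I := by
        have h1 : a * (b * t) ∈ I := by
          have := hab t ht; rw [smul_eq_mul] at this; rwa [← mul_assoc]
        exact hI.2 a (b * t) h1 (by rwa [← mul_assoc]) haJ
      intro p hp
      rw [smul_eq_mul]
      by_cases h0 : a * b * p = 0
      · have hpt : p + t ∈ Ideal.span S := Ideal.add_mem _ hp ht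
        have h1 : a * (b * (p + t)) ∈ I := by
          have := hab (p + t) hpt; rw [smul_eq_mul] at this; rwa [← mul_assoc]
        have h2 : a * (b * (p + t)) ≠ 0 := by
          rw [← mul_assoc, mul_add, h0, zero_add]; exact ht0
        have h3 : b * (p + t) ∈ I := hI.2 a _ h1 h2 haJ
        have : b * p = b * (p + t) - b * t := by ring
        rw [this]
        exact I.sub_mem h3 hbt
      · have h1 : a * (b * p) ∈ I := by
          have := hab p hp; rw [smul_eq_mul] at this; rwa [← mul_assoc]
        exact hI.2 a (b * p) h1 (by rwa [← mul_assoc]) haJ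
end

section
/- If I is a weakly prime ideal of a commutative ring R and I ⊆ J(R), then I is a weakly J-ideal of R. -/
theorem stmt10 {R : Type*} [CommRing R] (I : Ideal R) (hI : I ≠ ⊤)
    (hwp : ∀ a b : R, a * b ∈ I → a * b ≠ 0 → a ∈ I ∨ b ∈ I)
    (hJ : I ≤ Ideal.jacobson (⊥ : Ideal R)) :
    IsWeaklyJIdeal I := by
  refine ⟨hI, fun a b hab hne ha => ?_⟩
  rcases hwp a b hab hne with h | h
  · exact absurd (hJ h) ha
  · exact h
end

section
/- Let f : R₁ → R₂ be a surjective ring homomorphism and I₁ a weakly J-ideal of R₁ with ker(f) ⊆ I₁. Then f(I₁) is a weakly J-ideal of R₂. -/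
theorem stmt14 {R₁ R₂ : Type*} [CommRing R₁] [CommRing R₂]
    (f : R₁ →+* R₂) (hf : Function.Surjective f)
    (I₁ : Ideal R₁) (h : IsWeaklyJIdeal I₁) (hker : RingHom.ker f ≤ I₁) :
    IsWeaklyJIdeal (I₁.map f) := by
  have hcomap : Ideal.comap f (I₁.map f) = I₁ := by
    rw [Ideal.comap_map_of_surjective f hf, sup_eq_left.mpr (by rwa [← RingHom.ker_eq_comap_bot] )]
  constructor
  · intro htop
    apply h.1
    rw [← hcomap, htop, Ideal.comap_top]
  · intro a b hab hab0 haJ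
    obtain ⟨x, rfl⟩ := hf a
    obtain ⟨y, rfl⟩ := hf b
    have hxy : x * y ∈ I₁ := by
      rw [← hcomap]
      simpa using hab
    have hxy0 : x * y ≠ 0 := by
      intro h0
      apply hab0
      rw [← map_mul, h0, map_zero]
    have hxJ : x ∉ Ideal.jacobson (⊥ : Ideal R₁) := by
      intro hx
      apply haJ
      rw [Ideal.mem_jacobson_bot] at hx ⊢
      intro z
      obtain ⟨w, rfl⟩ := hf z
      have := (hx w).map f
      simpa using this
    exact Ideal.mem_map_of_mem f (h.2 x y hxy hxy0 hxJ)
end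

section
/- Let K ⊆ I be proper ideals of a commutative ring R. If K is a J-ideal of R and I/K is a weakly J-ideal of R/K, then I is a J-ideal of R. -/
theorem stmt15 {R : Type*} [CommRing R] (K I : Ideal R) (hKI : K ≤ I)
    (hI : I ≠ ⊤) (hK : IsJIdeal K)
    (h : IsWeaklyJIdeal (I.map (Ideal.Quotient.mk K))) :
    IsJIdeal I := by
  obtain ⟨hKtop, hKprop⟩ := hK
  obtain ⟨_, hWprop⟩ := h
  -- K ≤ jacobson ⊥
  have hKJ : K ≤ Ideal.jacobson (⊥ : Ideal R) := by
    intro k hk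
    by_contra hkJ
    exact hKtop (Ideal.eq_top_iff_one K |>.mpr (hKprop k 1 (by simpa using hk) hkJ))
  refine ⟨hI, fun a b hab haJ => ?_⟩
  by_cases hK0 : a * b ∈ K
  · exact hKI (hKprop a b hK0 haJ)
  · set f := Ideal.Quotient.mk K
    have hsurj : Function.Surjective f := Ideal.Quotient.mk_surjective
    have hjac : Ideal.map f (Ideal.jacobson K)
        = Ideal.jacobson (⊥ : Ideal (R ⧸ K)) := by
      have := Ideal.map_jacobson_of_surjective (f := (f : R →+* R ⧸ K)) hsurj
        (by rw [Ideal.mk_ker])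
      rw [this, Ideal.map_quotient_self]
    have hbJ : f a ∉ Ideal.jacobson (⊥ : Ideal (R ⧸ K)) := by
      rw [← hjac]
      intro hmem
      have ha' : a ∈ Ideal.jacobson K := by
        rwa [Ideal.mem_quotient_iff_mem (Ideal.le_jacobson)] at hmem
      exact haJ (by
        have : Ideal.jacobson K ≤ Ideal.jacobson (⊥ : Ideal R) := by
          rw [← Ideal.jacobson_idem (I := (⊥ : Ideal R))]
          exact Ideal.jacobson_mono (by simpa using hKJ)
        exact this ha')
    have hmem : f a * f b ∈ I.map f := by
      rw [← map_mul]; exact Ideal.mem_map_of_mem f hab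
    have hne : f a * f b ≠ 0 := by
      rw [← map_mul]
      intro h0
      exact hK0 (Ideal.Quotient.eq_zero_iff_mem.mp h0)
    have hb : f b ∈ I.map f := hWprop (f a) (f b) hmem hne hbJ
    rwa [Ideal.mem_quotient_iff_mem hKI] at hb
end

section
/- Every weakly J-ideal of a presimplifiable commutative ring is a J-ideal. -/
theorem stmt16 {R : Type*} [CommRing R]
    (hp : ∀ a b : R, a = a * b → a = 0 ∨ IsUnit b)
    (I : Ideal R) (h : IsWeaklyJIdeal I) : IsJIdeal I := by
  refine ⟨h.1, fun a b hab haJ => ?_⟩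
  by_cases hz : a * b = 0
  · -- a is a zero divisor unless b = 0; presimplifiable forces b = 0
    rw [Ideal.mem_jacobson_bot] at haJ
    push_neg at haJ
    obtain ⟨y, hy⟩ := haJ
    have : b = b * (a * y + 1) := by
      have : a * b * y = 0 := by rw [hz]; ring
      linear_combination -this
    rcases hp b (a * y + 1) this with hb | hu
    · rw [hb]; exact I.zero_mem
    · exact absurd hu hy
  · exact h.2 a b hab hz haJ
end

section
/- Every weakly J-ideal I of a commutative ring R is superfluous; that is, if K is an ideal of R with I + K = R, then K = R. -/
theorem stmt17 {R : Type*} [CommRing R] (I : Ideal R)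
    (h : IsWeaklyJIdeal I) : ∀ K : Ideal R, I ⊔ K = ⊤ → K = ⊤ := by
  obtain ⟨hne, hwj⟩ := h
  -- First: I ⊆ jacobson ⊥
  have hsub : ∀ x ∈ I, x ∈ Ideal.jacobson (⊥ : Ideal R) := by
    intro x hx
    by_cases hx0 : x = 0
    · simp [hx0]
    by_contra hxJ
    have h1 : (1 : R) ∈ I := by
      have := hwj x 1 (by simpa using hx) (by simpa using hx0) hxJ
      exact this
    exact hne (Ideal.eq_top_of_isUnit_mem I h1 isUnit_one)
  intro K hK
  have h1 : (1 : R) ∈ I ⊔ K := hK ▸ Submodule.mem_top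
  rw [Submodule.mem_sup] at h1
  obtain ⟨i, hi, k, hk, hik⟩ := h1
  have hiJ : i ∈ Ideal.jacobson (⊥ : Ideal R) := hsub i hi
  rw [Ideal.mem_jacobson_bot] at hiJ
  have hu : IsUnit (i * (-1) + 1) := hiJ (-1)
  have : i * (-1) + 1 = k := by linear_combination -hik
  rw [this] at hu
  exact Ideal.eq_top_of_isUnit_mem K hk hu
end

section
/- Let M be a module over a commutative ring R, and let I be an ideal of R and N a submodule of M with IM ⊆ N. If the ideal I(+)N of the idealization ring R(+)M is a weakly J-ideal, then I is a weakly J-ideal of R. -/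
theorem stmt19 {R : Type*} [CommRing R] {M : Type*} [AddCommGroup M] [Module R M]
    [Module Rᵐᵒᵖ M] [IsCentralScalar R M]
    (I : Ideal R) (N : Submodule R M) (hIM : ∀ r ∈ I, ∀ m : M, r • m ∈ N)
    (P : Ideal (TrivSqZeroExt R M))
    (hP : ∀ x : TrivSqZeroExt R M, x ∈ P ↔ x.fst ∈ I ∧ x.snd ∈ N)
    (h : IsWeaklyJIdeal P) : IsWeaklyJIdeal I := by
  obtain ⟨hPtop, hPw⟩ := h
  constructor
  · intro hIt
    apply hPtop
    rw [Ideal.eq_top_iff_one]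
    exact (hP 1).mpr ⟨by simp [hIt], by simp⟩
  · intro a b hab hab0 haJ
    have hx : (TrivSqZeroExt.inl a : TrivSqZeroExt R M) * TrivSqZeroExt.inl b ∈ P := by
      rw [hP]
      constructor
      · simpa using hab
      · simp
    have hx0 : (TrivSqZeroExt.inl a : TrivSqZeroExt R M) * TrivSqZeroExt.inl b ≠ 0 := by
      intro hcon
      apply hab0
      have := congrArg TrivSqZeroExt.fst hcon
      simpa using this
    have hxJ : (TrivSqZeroExt.inl a : TrivSqZeroExt R M) ∉
        Ideal.jacobson (⊥ : Ideal (TrivSqZeroExt R M)) := by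
      intro hcon
      apply haJ
      rw [Ideal.mem_jacobson_bot] at hcon ⊢
      intro y
      have := hcon (TrivSqZeroExt.inl y)
      rw [TrivSqZeroExt.isUnit_iff_isUnit_fst] at this
      simpa using this
    have := hPw _ _ hx hx0 hxJ
    rw [hP] at this
    simpa using this.1
end
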